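/- Let Λ = Σ_{r=1}^q π_r·W_r be a convex combination of matrices. If ρ(Σ_r π_r·(W_r ⊗ W_r)) < 1, then ρ(Λ) < 1. -/

import Mathlib

open Matrix

open scoped Kronecker

open scoped ENNReal NNReal

/-- The spectral radius of a real square matrix. -/
noncomputable def specRad {d : Type*} [Fintype d] [DecidableEq d] (M : Matrix d d ℝ) : ℝ :=
  sSup {x : ℝ | ∃ μ : ℂ, (M.map (Complex.ofReal)).charpoly.IsRoot μ ∧ x = ‖μ‖}

section Aux

open Polynomial ComplexOrder

variable {n : Type*} [Fintype n] [DecidableEq n]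

lemma aux_eval_charpoly (A : Matrix n n ℂ) (μ : ℂ) :
    A.charpoly.eval μ = (μ • (1 : Matrix n n ℂ) - A).det := by
  rw [Matrix.charpoly, ← Polynomial.coe_evalRingHom, RingHom.map_det]
  congr 1
  ext i j
  by_cases h : i = j <;>
    simp [charmatrix_apply, Matrix.diagonal_apply, h, Matrix.one_apply, Matrix.smul_apply,
      Matrix.sub_apply]

lemma aux_spectrum_iff (A : Matrix n n ℂ) (μ : ℂ) :
    μ ∈ spectrum ℂ A ↔ A.charpoly.IsRoot μ := by
  rw [spectrum.mem_iff, Matrix.isUnit_iff_isUnit_det, Polynomial.IsRoot,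
    Algebra.algebraMap_eq_smul_one, aux_eval_charpoly, isUnit_iff_ne_zero, not_not]

lemma aux_eigenvector (A : Matrix n n ℂ) (μ : ℂ) (h : A.charpoly.IsRoot μ) :
    ∃ v : n → ℂ, v ≠ 0 ∧ A *ᵥ v = μ • v := by
  have hdet : (μ • (1 : Matrix n n ℂ) - A).det = 0 := by
    rw [← aux_eval_charpoly]; exact h
  obtain ⟨v, hv0, hv⟩ := (Matrix.exists_mulVec_eq_zero_iff).mpr hdet
  refine ⟨v, hv0, ?_⟩
  rw [Matrix.sub_mulVec, sub_eq_zero, Matrix.smul_mulVec, Matrix.one_mulVec] at hv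
  exact hv.symm

lemma aux_set_finite (P : Matrix n n ℝ) :
    {x : ℝ | ∃ μ : ℂ, (P.map (Complex.ofReal)).charpoly.IsRoot μ ∧ x = ‖μ‖}.Finite := by
  have hp : (P.map (Complex.ofReal)).charpoly ≠ 0 := (Matrix.charpoly_monic _).ne_zero
  have h : {x : ℝ | ∃ μ : ℂ, (P.map (Complex.ofReal)).charpoly.IsRoot μ ∧ x = ‖μ‖}
      = (fun μ : ℂ => ‖μ‖) '' {μ | (P.map (Complex.ofReal)).charpoly.IsRoot μ} := by
    ext x
    simp [Set.mem_image, eq_comm]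
  rw [h]
  exact (Polynomial.finite_setOf_isRoot hp).image _

lemma aux_abs_root_le_specRad (P : Matrix n n ℝ) {μ : ℂ}
    (h : ((P.map Complex.ofReal).charpoly).IsRoot μ) : ‖μ‖ ≤ specRad P :=
  le_csSup (aux_set_finite P).bddAbove ⟨μ, h, rfl⟩

lemma aux_specRad_lt_one (P : Matrix n n ℝ)
    (h : ∀ μ : ℂ, ((P.map Complex.ofReal).charpoly).IsRoot μ → ‖μ‖ < 1) :
    specRad P < 1 := by
  rcases Set.eq_empty_or_nonempty
    {x : ℝ | ∃ μ : ℂ, (P.map (Complex.ofReal)).charpoly.IsRoot μ ∧ x = ‖μ‖} with he | hne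
  · rw [specRad, he, Real.sSup_empty]; norm_num
  · obtain ⟨μ, hμ, hx⟩ := hne.csSup_mem (aux_set_finite P)
    rw [specRad, hx]
    exact h μ hμ

lemma aux_psd_smul {c : ℝ} (hc : 0 ≤ c) {A : Matrix n n ℂ} (hA : A.PosSemidef) :
    ((c : ℂ) • A).PosSemidef := by
  constructor
  · rw [Matrix.IsHermitian, Matrix.conjTranspose_smul, hA.1]
    norm_num
  · intro x
    exact (hA.smul (Complex.zero_le_real.mpr hc)).2 x

lemma aux_psd_vecMulVec (v : n → ℂ) : (vecMulVec v (star v)).PosSemidef := by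
  constructor
  · ext i j
    simp [Matrix.conjTranspose_apply, Matrix.vecMulVec_apply, mul_comm]
  · exact (posSemidef_vecMulVec_self_star v).2

lemma aux_psd_diag {A : Matrix n n ℂ} (hA : A.PosSemidef) (i : n) : 0 ≤ A i i := by
  exact hA.diag_nonneg

lemma aux_psd_sum {q : ℕ} (c : Fin q → ℝ) (hc : ∀ r, 0 ≤ c r)
    (F : Fin q → Matrix n n ℂ) (hF : ∀ r, (F r).PosSemidef) :
    (∑ r, (c r : ℂ) • F r).PosSemidef := by
  refine Finset.sum_induction _ _ (fun a b ha hb => ha.add hb) Matrix.PosSemidef.zero ?_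
  intro r _
  exact aux_psd_smul (hc r) (hF r)

lemma aux_identity {q : ℕ} (c : Fin q → ℂ) (B : Fin q → Matrix n n ℂ) (X L : Matrix n n ℂ)
    (hL : L = ∑ r, c r • B r) (h1 : ∑ r, c r = 1) (hstar : ∀ r, star (c r) = c r) :
    ∑ r, c r • ((B r - L) * X * (B r - L)ᴴ)
      = (∑ r, c r • (B r * X * (B r)ᴴ)) - L * X * Lᴴ := by
  have expand : ∀ r, (B r - L) * X * (B r - L)ᴴ
      = B r * X * (B r)ᴴ - B r * X * Lᴴ - L * X * (B r)ᴴ + L * X * Lᴴ := fun r => by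
    rw [Matrix.conjTranspose_sub]
    noncomm_ring
  have e1 : ∑ r, c r • (B r * X * Lᴴ) = L * X * Lᴴ := by
    calc ∑ r, c r • (B r * X * Lᴴ) = (∑ r, c r • B r) * (X * Lᴴ) := by
          rw [Finset.sum_mul]
          exact Finset.sum_congr rfl fun r _ => by rw [smul_mul_assoc, mul_assoc]
      _ = L * X * Lᴴ := by rw [← hL, mul_assoc]
  have e2 : ∑ r, c r • (L * X * (B r)ᴴ) = L * X * Lᴴ := by
    calc ∑ r, c r • (L * X * (B r)ᴴ) = (L * X) * ∑ r, (c r • B r)ᴴ := by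
          rw [Finset.mul_sum]
          exact Finset.sum_congr rfl fun r _ => by
            rw [Matrix.conjTranspose_smul, hstar, mul_smul_comm]
      _ = L * X * Lᴴ := by rw [← Matrix.conjTranspose_sum, ← hL]
  have e3 : ∑ r, c r • (L * X * Lᴴ) = L * X * Lᴴ := by
    rw [← Finset.sum_smul, h1, one_smul]
  simp only [expand, smul_sub, smul_add, Finset.sum_sub_distrib, Finset.sum_add_distrib]
  rw [e1, e2, e3]
  abel

lemma aux_kron {B A : Matrix n n ℂ} (hB : ∀ i j, star (B i j) = B i j) (i i' : n) :
    (B * A * Bᴴ) i i' = ∑ p : n × n, (B ⊗ₖ B) (i, i') p * A p.1 p.2 := by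
  rw [Fintype.sum_prod_type]
  calc (B * A * Bᴴ) i i' = ∑ j', (∑ j, B i j * A j j') * star (B i' j') := by
        simp [Matrix.mul_apply, Matrix.conjTranspose_apply]
    _ = ∑ j', ∑ j, B i j * B i' j' * A j j' := by
        refine Finset.sum_congr rfl fun j' _ => ?_
        rw [Finset.sum_mul, hB]
        exact Finset.sum_congr rfl fun j _ => by ring
    _ = ∑ j, ∑ j', B i j * B i' j' * A j j' := Finset.sum_comm
    _ = ∑ j, ∑ j', (B ⊗ₖ B) (i, i') (j, j') * A j j' := by
        simp [Matrix.kroneckerMap_apply]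

end Aux

open scoped ComplexOrder

/-- Mean square stability implies stability of the mean dynamics: if
`ρ(Σ_r π_r (W_r ⊗ W_r)) < 1` for a probability vector `π`, then the averaged matrix
`Λ = Σ_r π_r·W_r` is Schur stable, i.e. `ρ(Λ) < 1`. -/
theorem stmt_15 {d q : ℕ} (W : Fin q → Matrix (Fin d) (Fin d) ℝ)
    (π : Fin q → ℝ) (hπ0 : ∀ r, 0 ≤ π r) (hπ1 : ∑ r, π r = 1)
    (Λ : Matrix (Fin d) (Fin d) ℝ) (hΛ : Λ = ∑ r, π r • W r)
    (hρ : specRad (∑ r, π r • (W r ⊗ₖ W r)) < 1) :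
    specRad Λ < 1 := by
  classical
  letI : NormedRing (Matrix (Fin d × Fin d) (Fin d × Fin d) ℂ) := Matrix.linftyOpNormedRing
  letI : NormedAlgebra ℂ (Matrix (Fin d × Fin d) (Fin d × Fin d) ℂ) := Matrix.linftyOpNormedAlgebra
  set M : Matrix (Fin d × Fin d) (Fin d × Fin d) ℝ := ∑ r, π r • (W r ⊗ₖ W r) with hM
  set Mc : Matrix (Fin d × Fin d) (Fin d × Fin d) ℂ := M.map Complex.ofReal with hMcdef
  set B : Fin q → Matrix (Fin d) (Fin d) ℂ := fun r => (W r).map Complex.ofReal with hB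
  set L : Matrix (Fin d) (Fin d) ℂ := Λ.map Complex.ofReal with hLdef
  have hBstar : ∀ r i j, star (B r i j) = B r i j := by
    intro r i j; simp [hB, Matrix.map_apply, Complex.conj_ofReal]
  have hL : L = ∑ r, (π r : ℂ) • B r := by
    rw [hLdef, hΛ]
    ext i j
    simp [Matrix.map_apply, Matrix.sum_apply, Matrix.smul_apply, smul_eq_mul, hB]
  have hMc : Mc = ∑ r, (π r : ℂ) • (B r ⊗ₖ B r) := by
    rw [hMcdef, hM]
    ext p p'
    simp [Matrix.map_apply, Matrix.sum_apply, Matrix.smul_apply, smul_eq_mul, hB,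
      Matrix.kroneckerMap_apply]
  have hπ1c : ∑ r, (π r : ℂ) = 1 := by exact_mod_cast congrArg Complex.ofReal hπ1
  -- spectral radius of Mc is < 1
  have hsR : spectralRadius ℂ Mc ≤ ENNReal.ofReal (specRad M) := by
    rw [spectralRadius]
    refine iSup₂_le fun z hz => ?_
    have hroot : Mc.charpoly.IsRoot z := (aux_spectrum_iff Mc z).mp hz
    have : ‖z‖ ≤ specRad M := aux_abs_root_le_specRad M hroot
    calc (‖z‖₊ : ℝ≥0∞) = ENNReal.ofReal ‖z‖ := (ENNReal.ofReal_eq_coe_nnreal (norm_nonneg z)).symm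
      _ ≤ ENNReal.ofReal (specRad M) := ENNReal.ofReal_le_ofReal this
  have hsR1 : spectralRadius ℂ Mc < 1 :=
    lt_of_le_of_lt hsR (ENNReal.ofReal_lt_one.mpr hρ)
  -- main argument
  apply aux_specRad_lt_one
  intro μ hroot
  by_contra habs
  push_neg at habs
  obtain ⟨v, hv0, hv⟩ := aux_eigenvector _ μ hroot
  rw [← hLdef] at hv
  -- the second-moment dynamics
  set S0 : Matrix (Fin d) (Fin d) ℂ := vecMulVec v (star v) with hS0
  set T : Matrix (Fin d) (Fin d) ℂ → Matrix (Fin d) (Fin d) ℂ :=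
    fun X => ∑ r, (π r : ℂ) • (B r * X * (B r)ᴴ) with hT
  have hS0psd : S0.PosSemidef := aux_psd_vecMulVec v
  have hTpsd : ∀ X : Matrix (Fin d) (Fin d) ℂ, X.PosSemidef → (T X).PosSemidef := by
    intro X hX
    exact aux_psd_sum π hπ0 _ fun r => hX.mul_mul_conjTranspose_same (B r)
  have hiterpsd : ∀ k, (T^[k] S0).PosSemidef := by
    intro k
    induction k with
    | zero => simpa using hS0psd
    | succ k ih => rw [Function.iterate_succ_apply']; exact hTpsd _ ih
  -- L * S0 * Lᴴ = γ • S0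
  set γ : ℂ := (Complex.normSq μ : ℂ) with hγdef
  have hBHstar : ∀ (X : Matrix (Fin d) (Fin d) ℂ), True := fun _ => trivial
  have hLS0 : L * S0 * Lᴴ = γ • S0 := by
    have h1 : L * S0 = vecMulVec (L *ᵥ v) (star v) := by
      ext i j
      simp only [Matrix.mul_apply, hS0, Matrix.vecMulVec_apply, Matrix.mulVec,
        dotProduct, Pi.star_apply, Finset.sum_mul]
      exact Finset.sum_congr rfl fun k _ => by ring
    have h2 : vecMulVec (μ • v) (star v) * Lᴴ = vecMulVec (μ • v) (star (L *ᵥ v)) := by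
      ext i j
      simp only [Matrix.mul_apply, Matrix.vecMulVec_apply, Matrix.conjTranspose_apply,
        Pi.star_apply, Matrix.mulVec, dotProduct, star_sum, star_mul', Finset.mul_sum]
      exact Finset.sum_congr rfl fun k _ => by ring
    rw [h1, hv, h2, hv]
    ext i j
    simp only [Matrix.vecMulVec_apply, Pi.smul_apply, Pi.star_apply, Matrix.smul_apply,
      smul_eq_mul, star_mul', hS0, Matrix.vecMulVec_apply, hγdef]
    rw [← Complex.mul_conj μ]
    ring_nf
    simp [RCLike.star_def]
    ring
  -- key PSD claim
  have hmain : ∀ k, ((T^[k] S0) - γ ^ k • S0).PosSemidef := by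
    intro k
    induction k with
    | zero => simpa using Matrix.PosSemidef.zero
    | succ k ih =>
      rw [Function.iterate_succ_apply']
      have hkey : (T (T^[k] S0) - L * (T^[k] S0) * Lᴴ).PosSemidef := by
        have hid := aux_identity (fun r => (π r : ℂ)) B (T^[k] S0) L hL hπ1c
          (fun r => by simp [RCLike.star_def, Complex.conj_ofReal])
        rw [hT, ← hid]
        exact aux_psd_sum π hπ0 _ fun r =>
          (hiterpsd k).mul_mul_conjTranspose_same (B r - L)
      have hcong : (L * ((T^[k] S0) - γ ^ k • S0) * Lᴴ).PosSemidef :=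
        ih.mul_mul_conjTranspose_same L
      have hexp : L * ((T^[k] S0) - γ ^ k • S0) * Lᴴ
          = L * (T^[k] S0) * Lᴴ - γ ^ (k + 1) • S0 := by
        rw [mul_sub, sub_mul, mul_smul_comm, smul_mul_assoc, hLS0,
          smul_smul, ← pow_succ]
      rw [hexp] at hcong
      have := hkey.add hcong
      convert this using 1
      abel
  -- vectorization: T^[k] S0 corresponds to Mc^k applied to vec(S0)
  set u : Fin d × Fin d → ℂ := fun p => v p.1 * star (v p.2) with hu
  have hvec : ∀ k : ℕ, (fun p : Fin d × Fin d => (T^[k] S0) p.1 p.2) = (Mc ^ k) *ᵥ u := by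
    intro k
    induction k with
    | zero =>
      funext p
      simp only [Function.iterate_zero_apply, pow_zero, Matrix.one_mulVec, hS0, hu,
        Matrix.vecMulVec_apply, Pi.star_apply]
    | succ k ih =>
      have step : (fun p : Fin d × Fin d => (T (T^[k] S0)) p.1 p.2)
          = Mc *ᵥ (fun p : Fin d × Fin d => (T^[k] S0) p.1 p.2) := by
        funext p
        obtain ⟨i, i'⟩ := p
        have lhs : (T (T^[k] S0)) i i'
            = ∑ r, (π r : ℂ) * ((B r * (T^[k] S0) * (B r)ᴴ) i i') := by
          simp [hT, Matrix.sum_apply, Matrix.smul_apply]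
        have rhs : (Mc *ᵥ (fun p : Fin d × Fin d => (T^[k] S0) p.1 p.2)) (i, i')
            = ∑ r, (π r : ℂ) *
              ∑ p' : Fin d × Fin d, (B r ⊗ₖ B r) (i, i') p' * (T^[k] S0) p'.1 p'.2 := by
          rw [hMc]
          simp only [Matrix.mulVec, dotProduct, Matrix.sum_apply, Matrix.smul_apply,
            smul_eq_mul, Finset.sum_mul]
          rw [Finset.sum_comm]
          refine Finset.sum_congr rfl fun r _ => ?_
          rw [Finset.mul_sum]
          exact Finset.sum_congr rfl fun p' _ => mul_assoc _ _ _
        show (T (T^[k] S0)) i i' = (Mc *ᵥ (fun p : Fin d × Fin d => (T^[k] S0) p.1 p.2)) (i, i')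
        rw [lhs, rhs]
        exact Finset.sum_congr rfl fun r _ => by rw [aux_kron (hBstar r)]
      funext p
      calc (T^[k + 1] S0) p.1 p.2 = (T (T^[k] S0)) p.1 p.2 := by
            rw [Function.iterate_succ_apply']
        _ = (Mc *ᵥ (fun p : Fin d × Fin d => (T^[k] S0) p.1 p.2)) p := congrFun step p
        _ = (Mc *ᵥ ((Mc ^ k) *ᵥ u)) p := by rw [ih]
        _ = ((Mc ^ (k + 1)) *ᵥ u) p := by rw [Matrix.mulVec_mulVec, ← pow_succ']
  -- quantitative bounds
  set N : ℝ := ∑ i, Complex.normSq (v i) with hN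
  obtain ⟨i0, hi0⟩ : ∃ i, v i ≠ 0 := Function.ne_iff.mp hv0
  have hNpos : 0 < N :=
    Finset.sum_pos' (fun i _ => Complex.normSq_nonneg _)
      ⟨i0, Finset.mem_univ _, Complex.normSq_pos.mpr hi0⟩
  have hunorm : 0 < ‖u‖ := by
    rw [norm_pos_iff]
    intro h0
    apply hi0
    have := congrFun h0 (i0, i0)
    simp only [hu, Pi.zero_apply, mul_eq_zero] at this
    rcases this with h | h
    · exact h
    · simpa using h
  have hdiag : ∀ k : ℕ, ∀ i : Fin d,
      Complex.normSq μ ^ k * Complex.normSq (v i) ≤ (((Mc ^ k) *ᵥ u) (i, i)).re := by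
    intro k i
    have hd := aux_psd_diag (hmain k) i
    rw [Complex.le_def] at hd
    obtain ⟨hre, -⟩ := hd
    simp only [Matrix.sub_apply, Matrix.smul_apply, Complex.zero_re, Complex.sub_re] at hre
    have h1 : ((γ ^ k • S0 : Matrix (Fin d) (Fin d) ℂ) i i).re
        = Complex.normSq μ ^ k * Complex.normSq (v i) := by
      have hS0ii : S0 i i = (Complex.normSq (v i) : ℂ) := by
        rw [hS0]
        show v i * star (v i) = _
        rw [← starRingEnd_apply, Complex.mul_conj]
      have hγk : γ ^ k = ((Complex.normSq μ ^ k : ℝ) : ℂ) := by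
        rw [hγdef]; push_cast; rfl
      rw [Matrix.smul_apply, hS0ii, hγk, smul_eq_mul, ← Complex.ofReal_mul]
      exact Complex.ofReal_re _
    have h2 : (T^[k] S0) i i = ((Mc ^ k) *ᵥ u) (i, i) := congrFun (hvec k) (i, i)
    have h3 : ((γ ^ k • S0 : Matrix (Fin d) (Fin d) ℂ) i i).re ≤ ((T^[k] S0) i i).re := by
      have := hre
      simp only [Matrix.sub_apply, Matrix.smul_apply, Complex.sub_re] at this ⊢
      linarith
    rw [← h2, ← h1]
    exact h3
  have hbound : ∀ k : ℕ, N ≤ (d : ℝ) * ‖u‖ * ‖Mc ^ k‖ := by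
    intro k
    have hsq : 1 ≤ Complex.normSq μ := by
      rw [Complex.normSq_eq_norm_sq]
      nlinarith [habs]
    have h2 : Complex.normSq μ ^ k * N ≤ ∑ i : Fin d, (((Mc ^ k) *ᵥ u) (i, i)).re := by
      rw [hN, Finset.mul_sum]
      exact Finset.sum_le_sum fun i _ => hdiag k i
    have h3 : ∑ i : Fin d, (((Mc ^ k) *ᵥ u) (i, i)).re ≤ (d : ℝ) * (‖Mc ^ k‖ * ‖u‖) := by
      calc ∑ i : Fin d, (((Mc ^ k) *ᵥ u) (i, i)).re
          ≤ ∑ i : Fin d, ‖((Mc ^ k) *ᵥ u) (i, i)‖ :=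
            Finset.sum_le_sum fun i _ => (Complex.re_le_norm _)
        _ ≤ ∑ _i : Fin d, ‖(Mc ^ k) *ᵥ u‖ :=
            Finset.sum_le_sum fun i _ => norm_le_pi_norm ((Mc ^ k) *ᵥ u) (i, i)
        _ = (d : ℝ) * ‖(Mc ^ k) *ᵥ u‖ := by
            simp [Finset.sum_const, Finset.card_univ, nsmul_eq_mul]
        _ ≤ (d : ℝ) * (‖Mc ^ k‖ * ‖u‖) := by
            have := Matrix.linfty_opNorm_mulVec (Mc ^ k) u
            have hd0 : (0 : ℝ) ≤ (d : ℝ) := by positivity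
            nlinarith [norm_nonneg ((Mc ^ k) *ᵥ u)]
    have hNle : N ≤ Complex.normSq μ ^ k * N := by
      nlinarith [one_le_pow₀ hsq (n := k), hNpos]
    calc N ≤ Complex.normSq μ ^ k * N := hNle
      _ ≤ ∑ i : Fin d, (((Mc ^ k) *ᵥ u) (i, i)).re := h2
      _ ≤ (d : ℝ) * (‖Mc ^ k‖ * ‖u‖) := h3
      _ = (d : ℝ) * ‖u‖ * ‖Mc ^ k‖ := by ring
  -- Gelfand's formula gives a contradiction
  have hdpos : (0 : ℝ) < d := by exact_mod_cast i0.pos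
  have hdenpos : 0 < (d : ℝ) * ‖u‖ := mul_pos hdpos hunorm
  set b : ℝ := N / ((d : ℝ) * ‖u‖) with hb
  have hbpos : 0 < b := div_pos hNpos hdenpos
  have hble : ∀ k, b ≤ ‖Mc ^ k‖ := by
    intro k
    rw [hb, div_le_iff₀ hdenpos]
    have := hbound k
    nlinarith
  have gel := spectrum.pow_norm_pow_one_div_tendsto_nhds_spectralRadius Mc
  have hlow : Filter.Tendsto (fun k : ℕ => ENNReal.ofReal (b ^ (1 / (k : ℝ))))
      Filter.atTop (nhds 1) := by
    have h0 : Filter.Tendsto (fun k : ℕ => 1 / (k : ℝ)) Filter.atTop (nhds 0) :=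
      tendsto_one_div_atTop_nhds_zero_nat
    have h1 : Filter.Tendsto (fun k : ℕ => b ^ (1 / (k : ℝ))) Filter.atTop (nhds 1) := by
      have := Filter.Tendsto.rpow (tendsto_const_nhds (x := b) (f := Filter.atTop)) h0
        (Or.inl (ne_of_gt hbpos))
      simpa using this
    have := ENNReal.tendsto_ofReal h1
    simpa using this
  have hev : ∀ᶠ k : ℕ in Filter.atTop, ENNReal.ofReal (b ^ (1 / (k : ℝ)))
      ≤ ENNReal.ofReal (‖Mc ^ k‖ ^ (1 / (k : ℝ))) := by
    filter_upwards with k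
    exact ENNReal.ofReal_le_ofReal (Real.rpow_le_rpow hbpos.le (hble k) (by positivity))
  have hge : (1 : ENNReal) ≤ spectralRadius ℂ Mc := le_of_tendsto_of_tendsto hlow gel hev
  exact absurd hsR1 (not_lt.mpr hge)
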